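/- For q ≥ 1, consider the symmetric decay space on three points {a, b, c} with f(a,b) = 1, f(b,c) = q, f(a,c) = 2q (and f(p,p) = 0). Then: (i) for every q ≥ 1 and all x, y, z ∈ {a,b,c}, f(x,z) ≤ 2·(f(x,y) + f(y,z)), so the multiplicative triangle parameter of the space is at most 2; and (ii) for every ζ ≥ 1 there exists q ≥ 1 such that (2q)^{1/ζ} > 1 + q^{1/ζ}, so that the metricity of the space exceeds ζ for q large enough. Hence the multiplicative triangle parameter stays bounded by 2 over this family while the metricity is unbounded. -/

import Mathlib

/-- The paper's three-point decay space on `{a, b, c} = {0, 1, 2}` with `f(a,b) = 1`,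
`f(b,c) = q`, `f(a,c) = 2q` (symmetric, zero on the diagonal). -/
def threePointDecay (q : ℝ) : Fin 3 → Fin 3 → ℝ := fun x y =>
  if x = y then 0
  else if (x = 0 ∧ y = 1) ∨ (x = 1 ∧ y = 0) then 1
  else if (x = 1 ∧ y = 2) ∨ (x = 2 ∧ y = 1) then q
  else 2 * q

/-- **The multiplicative triangle parameter can stay bounded while metricity blows up.**
(i) For every `q ≥ 1` the three-point space satisfies `f(x,z) ≤ 2·(f(x,y) + f(y,z))`
for all triples, so its multiplicative triangle parameter is at most `2`; and
(ii) for every `ζ ≥ 1` there is `q ≥ 1` with `(2q)^{1/ζ} > 1 + q^{1/ζ}`, so the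
metricity of the space exceeds `ζ` for `q` large enough. -/
theorem stmt_10 :
    (∀ q : ℝ, 1 ≤ q → ∀ x y z : Fin 3,
      threePointDecay q x z ≤ 2 * (threePointDecay q x y + threePointDecay q y z)) ∧
    (∀ ζ : ℝ, 1 ≤ ζ → ∃ q : ℝ, 1 ≤ q ∧ 1 + q ^ (1/ζ) < (2 * q) ^ (1/ζ)) := by
  constructor
  · intro q hq x y z
    fin_cases x <;> fin_cases y <;> fin_cases z <;>
      simp [threePointDecay] <;> nlinarith
  · intro ζ hζ
    have hζ0 : (0:ℝ) < ζ := lt_of_lt_of_le one_pos hζ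
    have hinv : 0 < 1/ζ := by positivity
    set c : ℝ := (2:ℝ) ^ (1/ζ) - 1 with hc
    have hc0 : 0 < c := by
      have : (1:ℝ) < (2:ℝ) ^ (1/ζ) := Real.one_lt_rpow_iff_of_pos (by norm_num) |>.mpr
        (Or.inl ⟨by norm_num, hinv⟩)
      rw [hc]; linarith
    set B : ℝ := 1/c + 1 with hB
    have hB1 : 1 ≤ B := by
      have : 0 < 1/c := by positivity
      rw [hB]; linarith
    have hB0 : 0 < B := lt_of_lt_of_le one_pos hB1
    refine ⟨B ^ ζ, Real.one_le_rpow hB1 hζ0.le, ?_⟩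
    have hq0 : 0 < B ^ ζ := Real.rpow_pos_of_pos hB0 ζ
    have hqB : (B ^ ζ) ^ (1/ζ) = B := by
      rw [← Real.rpow_mul hB0.le, mul_one_div_cancel hζ0.ne', Real.rpow_one]
    rw [Real.mul_rpow (by norm_num) hq0.le, hqB]
    have : (2:ℝ) ^ (1/ζ) = c + 1 := by rw [hc]; ring
    rw [this]
    have hcB : c * B = 1 + c := by
      rw [hB, mul_add, mul_one_div_cancel hc0.ne', mul_one]
    nlinarith
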